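/- The full-space convolution identity in ℝ⁵: for all x ≠ y, ∫_{ℝ⁵} R_0(z − y) R_0(z − x) dz = 1/(16π²|x − y|). -/

import Mathlib

open Set Function Metric MeasureTheory Real Filter
open scoped ENNReal NNReal Topology

local notation "dim" => Module.finrank ℝ

section RadialLintegral
variable {E : Type*} [NormedAddCommGroup E] [NormedSpace ℝ E] [MeasurableSpace E]
  [Nontrivial E] [FiniteDimensional ℝ E] [BorelSpace E]

theorem lintegral_fun_norm_addHaar (μ : Measure E) [μ.IsAddHaarMeasure]
    (f : ℝ → ℝ≥0∞) (hf : Measurable f) :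
    ∫⁻ x, f ‖x‖ ∂μ = (dim E) * μ (ball 0 1) *
      ∫⁻ y in Ioi (0 : ℝ), ENNReal.ofReal (y ^ (dim E - 1)) * f y := by
  have hg : Measurable fun p : sphere (0 : E) 1 × Ioi (0 : ℝ) => f p.2 :=
    (hf.comp measurable_subtype_coe).comp measurable_snd
  calc
    ∫⁻ x, f ‖x‖ ∂μ = ∫⁻ x : ({(0)}ᶜ : Set E), f ‖x.1‖ ∂(μ.comap (↑)) := by
      rw [lintegral_subtype_comap (measurableSet_singleton _).compl fun x ↦ f (‖x‖),
        MeasureTheory.restrict_compl_singleton]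
    _ = ∫⁻ p : sphere (0 : E) 1 × Ioi (0 : ℝ), f p.2
        ∂μ.toSphere.prod (.volumeIoiPow (dim E - 1)) := by
      rw [← μ.measurePreserving_homeomorphUnitSphereProd.lintegral_comp hg]
      simp
    _ = μ.toSphere univ * ∫⁻ y : Ioi (0:ℝ), f y ∂(Measure.volumeIoiPow (dim E - 1)) := by
      rw [MeasureTheory.lintegral_prod _ hg.aemeasurable]
      simp [MeasureTheory.lintegral_const]
      ring
    _ = (dim E) * μ (ball 0 1) * ∫⁻ y in Ioi (0:ℝ),
          ENNReal.ofReal (y ^ (dim E - 1)) * f y := by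
      rw [Measure.toSphere_apply_univ]
      congr 1
      rw [Measure.volumeIoiPow, lintegral_withDensity_eq_lintegral_mul _
          (by fun_prop) (show Measurable fun y : Ioi (0:ℝ) => f y from hf.comp measurable_subtype_coe),
        ← lintegral_subtype_comap measurableSet_Ioi
          (fun y => ENNReal.ofReal (y ^ (dim E - 1)) * f y)]
      rfl

end RadialLintegral

lemma sqrt_hasDeriv (a s : ℝ) (ha : 0 < a) :
    HasDerivAt (fun s : ℝ => Real.sqrt (a^2 + s^2)) (s / Real.sqrt (a^2 + s^2)) s := by
  have h1 : HasDerivAt (fun s : ℝ => a^2 + s^2) (2*s) s := by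
    simpa using ((hasDerivAt_pow 2 s).const_add (a^2))
  have h2 := (Real.hasDerivAt_sqrt (show a^2 + s^2 ≠ 0 by positivity)).comp s h1
  refine h2.congr_deriv ?_
  field_simp

lemma sIntegral (a b : ℝ) (ha : 0 < a) (hb : 0 < b) (hab : a ≠ b) :
    IntegrableOn (fun s => s^3 * ((Real.sqrt (a^2+s^2))^3)⁻¹ * ((Real.sqrt (b^2+s^2))^3)⁻¹)
      (Ioi (0:ℝ)) ∧
    ∫ s in Ioi (0:ℝ), s^3 * ((Real.sqrt (a^2+s^2))^3)⁻¹ * ((Real.sqrt (b^2+s^2))^3)⁻¹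
      = ((a+b)^2)⁻¹ := by
  set p : ℝ := 2*(a^2+b^2)/(a^2-b^2)^2 with hp
  set q : ℝ := 4*a^2*b^2/(a^2-b^2)^2 with hq
  set G : ℝ → ℝ := fun s => (p*s^2+q)/(2*(Real.sqrt (a^2+s^2)*Real.sqrt (b^2+s^2))) with hG
  have hd2 : a^2 - b^2 ≠ 0 := by
    intro h
    exact hab (by nlinarith)
  have hderiv : ∀ s : ℝ, HasDerivAt G
      (s^3 * ((Real.sqrt (a^2+s^2))^3)⁻¹ * ((Real.sqrt (b^2+s^2))^3)⁻¹) s := by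
    intro s
    have hU0 : 0 < Real.sqrt (a^2+s^2) := Real.sqrt_pos.2 (by positivity)
    have hV0 : 0 < Real.sqrt (b^2+s^2) := Real.sqrt_pos.2 (by positivity)
    set U := Real.sqrt (a^2+s^2)
    set V := Real.sqrt (b^2+s^2)
    have hU2 : U^2 = a^2+s^2 := Real.sq_sqrt (by positivity)
    have hV2 : V^2 = b^2+s^2 := Real.sq_sqrt (by positivity)
    have hnum : HasDerivAt (fun s : ℝ => p*s^2+q) (p*(2*s)) s := by
      simpa using (((hasDerivAt_pow 2 s).const_mul p).add_const q)
    have hden : HasDerivAt (fun s : ℝ => 2*(Real.sqrt (a^2+s^2)*Real.sqrt (b^2+s^2)))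
        (2*((s/U)*V + U*(s/V))) s := by
      exact (((sqrt_hasDeriv a s ha).mul (sqrt_hasDeriv b s hb)).const_mul 2)
    have h := hnum.div hden (by positivity)
    refine h.congr_deriv ?_
    have ha2 : a^2 = U^2 - s^2 := by rw [hU2]; ring
    have hb2 : b^2 = V^2 - s^2 := by rw [hV2]; ring
    have hd2' : U^2 - V^2 ≠ 0 := by rw [hU2, hV2]; intro h'; apply hd2; nlinarith
    rw [show Real.sqrt (a^2+s^2) = U from rfl, show Real.sqrt (b^2+s^2) = V from rfl]
    rw [hp, hq, ha2, hb2]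
    have h4 : (U^2 - s^2 - (V^2 - s^2)) ≠ 0 := by intro h'; apply hd2'; nlinarith
    field_simp
    ring
  have hmono := fun s (_ : s ∈ Ioi (0:ℝ)) => hderiv s
  have hpos : ∀ s ∈ Ioi (0:ℝ),
      0 ≤ s^3 * ((Real.sqrt (a^2+s^2))^3)⁻¹ * ((Real.sqrt (b^2+s^2))^3)⁻¹ := by
    intro s hs
    have : (0:ℝ) < s := hs
    positivity
  -- limit at infinity
  set H : ℝ → ℝ := fun x => (p + q*x^2)/(2*(Real.sqrt (a^2*x^2+1)*Real.sqrt (b^2*x^2+1))) with hH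
  have hHcont : ContinuousAt H 0 := by
    apply ContinuousAt.div
    · fun_prop
    · fun_prop
    · norm_num
  have hH0 : H 0 = p/2 := by simp [hH]
  have htend : Tendsto G atTop (𝓝 (p/2)) := by
    rw [← hH0]
    have comp : Tendsto (fun s : ℝ => H s⁻¹) atTop (𝓝 (H 0)) :=
      hHcont.tendsto.comp tendsto_inv_atTop_zero
    apply comp.congr'
    filter_upwards [eventually_gt_atTop (0:ℝ)] with s hs
    have e1 : a^2 + s^2 = s^2*(a^2*(s⁻¹)^2+1) := by field_simp
    have e2 : b^2 + s^2 = s^2*(b^2*(s⁻¹)^2+1) := by field_simp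
    have h1 : Real.sqrt (a^2+s^2) = s * Real.sqrt (a^2*(s⁻¹)^2+1) := by
      rw [e1, Real.sqrt_mul (sq_nonneg s), Real.sqrt_sq hs.le]
    have h2 : Real.sqrt (b^2+s^2) = s * Real.sqrt (b^2*(s⁻¹)^2+1) := by
      rw [e2, Real.sqrt_mul (sq_nonneg s), Real.sqrt_sq hs.le]
    have hx0 : 0 < Real.sqrt (a^2*(s⁻¹)^2+1) := Real.sqrt_pos.2 (by positivity)
    have hy0 : 0 < Real.sqrt (b^2*(s⁻¹)^2+1) := Real.sqrt_pos.2 (by positivity)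
    rw [hH, hG]
    simp only
    rw [h1, h2]
    field_simp
  have hcont : ContinuousWithinAt G (Ici 0) 0 := (hderiv 0).continuousAt.continuousWithinAt
  refine ⟨integrableOn_Ioi_deriv_of_nonneg hcont hmono hpos htend, ?_⟩
  rw [integral_Ioi_of_hasDerivAt_of_tendsto hcont hmono
    (integrableOn_Ioi_deriv_of_nonneg hcont hmono hpos htend) htend]
  have hG0 : G 0 = q/(2*(a*b)) := by
    simp only [hG]
    norm_num
    rw [Real.sqrt_sq ha.le, Real.sqrt_sq hb.le]
  rw [hG0, hp, hq]
  have h1 : a + b ≠ 0 := by positivity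
  have h2 : a - b ≠ 0 := sub_ne_zero.2 hab
  field_simp
  ring

lemma ioiPiece (d a : ℝ) (h : 0 < 2*a+d) :
    IntegrableOn (fun t : ℝ => ((2*t+d)^2)⁻¹) (Ioi a) ∧
    ∫ t in Ioi a, ((2*t+d)^2)⁻¹ = (2*(2*a+d))⁻¹ := by
  set G : ℝ → ℝ := fun t => -(2*(2*t+d))⁻¹ with hG
  have hpos' : ∀ t ∈ Ioi a, (0:ℝ) < 2*t+d := by
    intro t ht
    simp only [mem_Ioi] at ht
    nlinarith
  have hderiv : ∀ t ∈ Ioi a, HasDerivAt G ((2*t+d)^2)⁻¹ t := by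
    intro t ht
    have h0 : 0 < 2*t+d := hpos' t ht
    have h1 : HasDerivAt (fun t : ℝ => 2*(2*t+d)) 4 t := by
      have h2 : HasDerivAt (fun t : ℝ => 2*t+d) 2 t := by
        simpa using ((hasDerivAt_id t).const_mul 2).add_const d
      have := h2.const_mul 2
      norm_num at this
      exact this
    have h2 := (h1.inv (by positivity)).neg
    refine h2.congr_deriv ?_
    field_simp
    ring
  have hpos : ∀ t ∈ Ioi a, (0:ℝ) ≤ ((2*t+d)^2)⁻¹ := fun t ht => by positivity
  have htend : Tendsto G atTop (𝓝 0) := by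
    rw [hG]
    have h1 : Tendsto (fun t : ℝ => 2*(2*t+d)) atTop atTop := by
      apply Tendsto.const_mul_atTop (show (0:ℝ) < 2 by norm_num)
      apply tendsto_atTop_add_const_right
      exact (tendsto_id.const_mul_atTop (show (0:ℝ) < 2 by norm_num))
    simpa using (h1.inv_tendsto_atTop).neg
  have hcont : ContinuousWithinAt G (Ici a) a := by
    apply ContinuousWithinAt.neg
    apply ContinuousWithinAt.inv₀
    · exact (Continuous.continuousWithinAt (by continuity))
    · exact (by positivity : (0:ℝ) < 2*(2*a+d)).ne'
  refine ⟨integrableOn_Ioi_deriv_of_nonneg hcont hderiv hpos htend, ?_⟩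
  rw [integral_Ioi_of_hasDerivAt_of_tendsto hcont hderiv
    (integrableOn_Ioi_deriv_of_nonneg hcont hderiv hpos htend) htend]
  simp [hG]

lemma tIntegral (c : ℝ) (hc : 0 < c) :
    Integrable (fun t : ℝ => ((|t| + |t - c|)^2)⁻¹) ∧
    ∫ t : ℝ, ((|t| + |t - c|)^2)⁻¹ = 2/c := by
  set f : ℝ → ℝ := fun t => ((|t| + |t - c|)^2)⁻¹ with hf
  have hc2 : (0:ℝ) < 2*c + -c := by linarith
  have hc3 : (0:ℝ) < 2*0 + c := by linarith
  obtain ⟨hint1, hval1⟩ := ioiPiece (-c) c hc2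
  obtain ⟨hint3, hval3⟩ := ioiPiece c 0 hc3
  have heq1 : EqOn f (fun t : ℝ => ((2*t+-c)^2)⁻¹) (Ioi c) := by
    intro t ht
    simp only [mem_Ioi] at ht
    have h1 : |t| = t := abs_of_pos (hc.trans ht)
    have h2 : |t - c| = t - c := abs_of_pos (by linarith)
    simp only [hf, h1, h2]
    ring_nf
  have hint1' : IntegrableOn f (Ioi c) :=
    hint1.congr_fun (fun t ht => (heq1 ht).symm) measurableSet_Ioi
  have hval1' : ∫ t in Ioi c, f t = (2*c)⁻¹ := by
    rw [setIntegral_congr_fun measurableSet_Ioi heq1, hval1]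
    norm_num
    ring_nf
  have heq2 : EqOn f (fun _ : ℝ => (c^2)⁻¹) (Ioc 0 c) := by
    intro t ht
    obtain ⟨ht1, ht2⟩ := ht
    have h1 : |t| = t := abs_of_pos ht1
    have h2 : |t - c| = -(t - c) := abs_of_nonpos (by linarith)
    simp only [hf, h1, h2]
    ring_nf
  have hint2 : IntegrableOn f (Ioc 0 c) := by
    apply IntegrableOn.congr_fun _ heq2.symm measurableSet_Ioc
    exact integrableOn_const (by simp [hc])
  have hval2 : ∫ t in Ioc 0 c, f t = c⁻¹ := by
    rw [setIntegral_congr_fun measurableSet_Ioc heq2, setIntegral_const]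
    simp [Real.volume_Ioc, ENNReal.toReal_ofReal hc.le, max_eq_left hc.le]
    field_simp
  -- Iic piece via reflection
  have A : MeasurableEmbedding (fun x : ℝ => -x) :=
    (Homeomorph.neg ℝ).isClosedEmbedding.measurableEmbedding
  have hmapeq : (volume : Measure ℝ).restrict (Iic 0) =
      Measure.map (fun x : ℝ => -x) ((volume : Measure ℝ).restrict (Ici 0)) := by
    conv_lhs => rw [← Measure.map_neg_eq_self (volume : Measure ℝ)]
    rw [A.restrict_map]
    congr 1
    simp [neg_preimage, neg_Iic]
  have heq3 : EqOn (fun t : ℝ => f (-t)) (fun t : ℝ => ((2*t+c)^2)⁻¹) (Ioi 0) := by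
    intro t ht
    simp only [mem_Ioi] at ht
    have h1 : |(-t)| = t := by rw [abs_neg, abs_of_pos ht]
    have h2 : |(-t) - c| = t + c := by
      rw [abs_of_nonpos (by linarith)]
      ring
    simp only [hf, h1, h2]
    ring_nf
  have hint4 : IntegrableOn f (Iic 0) := by
    rw [IntegrableOn, hmapeq, A.integrable_map_iff,
      Measure.restrict_congr_set Ioi_ae_eq_Ici.symm]
    exact (hint3.congr_fun (fun t ht => (heq3 ht).symm) measurableSet_Ioi : _)
  have hval4 : ∫ t in Iic 0, f t = (2*c)⁻¹ := by
    have e1 := integral_comp_neg_Iic (0:ℝ) (fun s : ℝ => f (-s))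
    simp only [neg_neg, neg_zero] at e1
    rw [e1, setIntegral_congr_fun measurableSet_Ioi heq3, hval3]
    norm_num
  -- assemble
  have hIoi_int : IntegrableOn f (Ioi 0) := by
    rw [← Ioc_union_Ioi_eq_Ioi hc.le]
    exact hint2.union hint1'
  have hIoi : ∫ t in Ioi 0, f t = c⁻¹ + (2*c)⁻¹ := by
    rw [← Ioc_union_Ioi_eq_Ioi hc.le,
      setIntegral_union (Ioc_disjoint_Ioi le_rfl) measurableSet_Ioi hint2 hint1', hval2, hval1']
  have hall : Integrable f := by
    rw [← integrableOn_univ, ← Iic_union_Ioi (a := (0:ℝ))]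
    exact hint4.union hIoi_int
  refine ⟨hall, ?_⟩
  rw [← setIntegral_univ, ← Iic_union_Ioi (a := (0:ℝ)),
    setIntegral_union (Iic_disjoint_Ioi le_rfl) measurableSet_Ioi hint4 hIoi_int, hval4, hIoi]
  field_simp
  ring

lemma innerE4 (a b : ℝ) (ha : 0 < a) (hb : 0 < b) (hab : a ≠ b) :
    ∫⁻ w : EuclideanSpace ℝ (Fin 4),
      ENNReal.ofReal (((Real.sqrt (a^2+‖w‖^2))^3)⁻¹ * ((Real.sqrt (b^2+‖w‖^2))^3)⁻¹)
      = ENNReal.ofReal (2*π^2 * ((a+b)^2)⁻¹) := by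
  set f : ℝ → ℝ≥0∞ := fun s =>
    ENNReal.ofReal (((Real.sqrt (a^2+s^2))^3)⁻¹ * ((Real.sqrt (b^2+s^2))^3)⁻¹) with hfdef
  have hf : Measurable f := by fun_prop
  have h := lintegral_fun_norm_addHaar (volume : Measure (EuclideanSpace ℝ (Fin 4))) f hf
  simp only [finrank_euclideanSpace, Fintype.card_fin] at h
  rw [hfdef] at h
  rw [h]
  have hball : (volume (ball (0 : EuclideanSpace ℝ (Fin 4)) 1)) = ENNReal.ofReal (π^2/2) := by
    rw [EuclideanSpace.volume_ball]
    simp only [Fintype.card_fin]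
    norm_num
    rw [show Real.sqrt π ^ 4 = (Real.sqrt π ^ 2)^2 by ring, Real.sq_sqrt pi_pos.le]
  rw [hball]
  have hcong : ∫⁻ y in Ioi (0:ℝ), ENNReal.ofReal (y ^ (4 - 1)) *
        ENNReal.ofReal (((Real.sqrt (a^2+y^2))^3)⁻¹ * ((Real.sqrt (b^2+y^2))^3)⁻¹)
      = ∫⁻ y in Ioi (0:ℝ), ENNReal.ofReal
          (y^3 * ((Real.sqrt (a^2+y^2))^3)⁻¹ * ((Real.sqrt (b^2+y^2))^3)⁻¹) := by
    apply setLIntegral_congr_fun measurableSet_Ioi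
    intro y hy
    have hy' : (0:ℝ) < y := hy
    norm_num
    rw [mul_assoc, ENNReal.ofReal_mul (p := y^3) (by positivity),
      ENNReal.ofReal_mul (p := ((Real.sqrt (a^2+y^2))^3)⁻¹) (by positivity)]
  rw [hcong]
  obtain ⟨hint, hval⟩ := sIntegral a b ha hb hab
  rw [← MeasureTheory.ofReal_integral_eq_lintegral_ofReal hint ?hnn]
  case hnn =>
    filter_upwards [ae_restrict_mem measurableSet_Ioi] with s hs
    have : (0:ℝ) < s := hs
    positivity
  rw [hval, show ((4:ℕ) : ℝ≥0∞) = ENNReal.ofReal 4 by simp,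
    ← ENNReal.ofReal_mul (by norm_num), ← ENNReal.ofReal_mul (by positivity)]
  congr 1
  ring

noncomputable def Phi : ℝ × EuclideanSpace ℝ (Fin 4) → EuclideanSpace ℝ (Fin 5) := fun p =>
  ((MeasurableEquiv.toLp 2 (Fin 5 → ℝ)).symm).symm
    ((MeasurableEquiv.piFinSuccAbove (fun _ : Fin 5 => ℝ) 0).symm
      (p.1, (MeasurableEquiv.toLp 2 (Fin 4 → ℝ)).symm p.2))

lemma Phi_measurePreserving : MeasurePreserving Phi volume volume := by
  have m5 := (EuclideanSpace.volume_preserving_symm_measurableEquiv_toLp (Fin 5)).symm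
  have mpi := (volume_preserving_piFinSuccAbove (fun _ : Fin 5 => ℝ) 0).symm
  have m4 := EuclideanSpace.volume_preserving_symm_measurableEquiv_toLp (Fin 4)
  have mprod : MeasurePreserving
      (fun p : ℝ × EuclideanSpace ℝ (Fin 4) => (p.1, (MeasurableEquiv.toLp 2 (Fin 4 → ℝ)).symm p.2))
      volume volume := by
    rw [Measure.volume_eq_prod, Measure.volume_eq_prod]
    exact (MeasurePreserving.id volume).prod m4
  exact (m5.comp mpi).comp mprod

lemma Phi_coord_zero (t : ℝ) (w : EuclideanSpace ℝ (Fin 4)) : Phi (t, w) 0 = t := by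
  simp [Phi, MeasurableEquiv.piFinSuccAbove_symm_apply, Fin.insertNthEquiv, Fin.consEquiv,
    MeasurableEquiv.coe_toLp, Fin.insertNth_zero]

lemma Phi_coord_succ (t : ℝ) (w : EuclideanSpace ℝ (Fin 4)) (j : Fin 4) :
    Phi (t, w) j.succ = w j := by
  simp [Phi, MeasurableEquiv.piFinSuccAbove_symm_apply, Fin.insertNthEquiv, Fin.consEquiv,
    MeasurableEquiv.coe_toLp, Fin.insertNth_zero]

lemma Phi_norm_sub (t : ℝ) (w : EuclideanSpace ℝ (Fin 4)) (r : ℝ) :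
    ‖Phi (t, w) - r • EuclideanSpace.single (0 : Fin 5) (1:ℝ)‖
      = Real.sqrt ((t - r)^2 + ‖w‖^2) := by
  rw [EuclideanSpace.norm_eq]
  congr 1
  rw [Fin.sum_univ_succ]
  have h0 : (Phi (t, w) - r • EuclideanSpace.single (0 : Fin 5) (1:ℝ)) 0 = t - r := by
    simp [Phi_coord_zero, EuclideanSpace.single_apply]
  have hs : ∀ j : Fin 4,
      (Phi (t, w) - r • EuclideanSpace.single (0 : Fin 5) (1:ℝ)) j.succ = w j := by
    intro j
    simp [Phi_coord_succ, EuclideanSpace.single_apply, Fin.succ_ne_zero]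
  rw [h0]
  simp only [hs]
  have : ∑ j : Fin 4, ‖w j‖^2 = ‖w‖^2 := by
    rw [EuclideanSpace.norm_eq, Real.sq_sqrt (by positivity)]
  rw [this, Real.norm_eq_abs, sq_abs]

lemma Phi_norm (t : ℝ) (w : EuclideanSpace ℝ (Fin 4)) :
    ‖Phi (t, w)‖ = Real.sqrt (t^2 + ‖w‖^2) := by
  have := Phi_norm_sub t w 0
  simpa using this


lemma keyLintegral (c : ℝ) (hc : 0 < c) :
    ∫⁻ z : EuclideanSpace ℝ (Fin 5),
      ENNReal.ofReal ((‖z‖^3)⁻¹ * (‖z - c • EuclideanSpace.single (0:Fin 5) (1:ℝ)‖^3)⁻¹)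
      = ENNReal.ofReal (4*π^2/c) := by
  have hmeas : Measurable fun z : EuclideanSpace ℝ (Fin 5) =>
      ENNReal.ofReal ((‖z‖^3)⁻¹ * (‖z - c • EuclideanSpace.single (0:Fin 5) (1:ℝ)‖^3)⁻¹) := by
    fun_prop
  rw [← Phi_measurePreserving.lintegral_comp hmeas]
  have hre : ∀ p : ℝ × EuclideanSpace ℝ (Fin 4),
      ENNReal.ofReal ((‖Phi p‖^3)⁻¹ * (‖Phi p - c • EuclideanSpace.single (0:Fin 5) (1:ℝ)‖^3)⁻¹)
      = ENNReal.ofReal (((Real.sqrt (p.1^2+‖p.2‖^2))^3)⁻¹ *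
          ((Real.sqrt ((p.1-c)^2+‖p.2‖^2))^3)⁻¹) := by
    rintro ⟨t, w⟩
    rw [Phi_norm, Phi_norm_sub]
  simp only [hre]
  rw [Measure.volume_eq_prod, lintegral_prod _ (by fun_prop)]
  have hae : ∀ᵐ t : ℝ, t ∉ ({0, c, c/2} : Set ℝ) := by
    have hz : volume ({0, c, c/2} : Set ℝ) = 0 := (Set.toFinite _).measure_zero volume
    exact measure_eq_zero_iff_ae_notMem.1 hz
  have hinner : ∀ᵐ t : ℝ, (∫⁻ w : EuclideanSpace ℝ (Fin 4),
        ENNReal.ofReal (((Real.sqrt (t^2+‖w‖^2))^3)⁻¹ * ((Real.sqrt ((t-c)^2+‖w‖^2))^3)⁻¹))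
      = ENNReal.ofReal (2*π^2 * ((|t|+|t-c|)^2)⁻¹) := by
    filter_upwards [hae] with t ht
    simp only [mem_insert_iff, mem_singleton_iff, not_or] at ht
    obtain ⟨ht0, htc, hthalf⟩ := ht
    have ha : 0 < |t| := abs_pos.2 ht0
    have hb : 0 < |t - c| := abs_pos.2 (sub_ne_zero.2 htc)
    have hab : |t| ≠ |t - c| := by
      intro h
      have h2 : t^2 = (t-c)^2 := by
        rw [← sq_abs t, ← sq_abs (t-c), h]
      apply hthalf
      nlinarith [sq_nonneg (t - c), sq_nonneg t]
    have := innerE4 |t| |t-c| ha hb hab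
    rw [← this]
    congr 1
    funext w
    rw [sq_abs, sq_abs]
  rw [lintegral_congr_ae hinner]
  obtain ⟨hint, hval⟩ := tIntegral c hc
  have hint2 : Integrable (fun t : ℝ => 2*π^2 * ((|t| + |t - c|)^2)⁻¹) := hint.const_mul _
  rw [← MeasureTheory.ofReal_integral_eq_lintegral_ofReal hint2 ?hnn]
  case hnn => filter_upwards with t; positivity
  rw [MeasureTheory.integral_const_mul, hval]
  congr 1
  field_simp
  ring

lemma keyIntegral (c : ℝ) (hc : 0 < c) :
    ∫ z : EuclideanSpace ℝ (Fin 5),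
      (‖z‖^3)⁻¹ * (‖z - c • EuclideanSpace.single (0:Fin 5) (1:ℝ)‖^3)⁻¹ = 4*π^2/c := by
  rw [MeasureTheory.integral_eq_lintegral_of_nonneg_ae ?h1 ?h2]
  case h1 => filter_upwards with z; positivity
  case h2 => exact Measurable.aestronglyMeasurable (by fun_prop)
  rw [keyLintegral c hc, ENNReal.toReal_ofReal (by positivity)]


noncomputable def R0 (x : EuclideanSpace ℝ (Fin 5)) : ℝ := 1 / (8 * π ^ 2 * ‖x‖ ^ 3)

/-- Full-space convolution identity in `ℝ⁵`: for `x ≠ y`,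
`∫_{ℝ⁵} R₀(z − y) R₀(z − x) dz = 1/(16π²|x − y|)`. -/
theorem stmt5 (x y : EuclideanSpace ℝ (Fin 5)) (hxy : x ≠ y) :
    ∫ z, R0 (z - y) * R0 (z - x) = 1 / (16 * π ^ 2 * ‖x - y‖) := by
  have hvne : x - y ≠ 0 := sub_ne_zero.2 hxy
  set c : ℝ := ‖x - y‖ with hcdef
  have hc : 0 < c := norm_pos_iff.2 hvne
  -- translation
  have htrans : ∫ z, R0 (z - y) * R0 (z - x)
      = ∫ z, R0 z * R0 (z - (x - y)) := by
    rw [← integral_add_right_eq_self (fun z => R0 (z - y) * R0 (z - x)) y]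
    congr 1
    funext z
    have h1 : z + y - y = z := by abel
    have h2 : z + y - x = z - (x - y) := by abel
    rw [h1, h2]
  rw [htrans]
  -- rotation
  have hu : ‖(c⁻¹ : ℝ) • (x - y)‖ = 1 := by
    rw [norm_smul, norm_inv, Real.norm_eq_abs, abs_of_pos hc, ← hcdef, inv_mul_cancel₀ hc.ne']
  have horth : Orthonormal ℝ (({0} : Set (Fin 5)).restrict
      (fun _ : Fin 5 => (c⁻¹ : ℝ) • (x - y))) := by
    rw [orthonormal_iff_ite]
    intro i j
    have hij : i = j := by
      apply Subtype.ext
      have hi := i.2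
      have hj := j.2
      simp only [mem_singleton_iff] at hi hj
      rw [hi, hj]
    subst hij
    simp only [if_pos rfl, Set.restrict_apply]
    rw [real_inner_self_eq_norm_sq, show ({0} : Set (Fin 5)).restrict
      (fun _ : Fin 5 => (c⁻¹ : ℝ) • (x - y)) i = (c⁻¹ : ℝ) • (x - y) from rfl, hu]
    norm_num
  obtain ⟨b, hb⟩ := Orthonormal.exists_orthonormalBasis_extension_of_card_eq
    (by simp) horth
  have hb0 : b 0 = (c⁻¹ : ℝ) • (x - y) := hb 0 rfl
  have hmp := b.measurePreserving_repr_symm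
  have hemb : MeasurableEmbedding b.repr.symm :=
    b.repr.symm.toHomeomorph.measurableEmbedding
  rw [← hmp.integral_comp hemb (fun z => R0 z * R0 (z - (x - y)))]
  have hrepr_v : b.repr (x - y) = c • EuclideanSpace.single (0 : Fin 5) (1:ℝ) := by
    have : x - y = c • b 0 := by
      rw [hb0, smul_smul, mul_inv_cancel₀ hc.ne', one_smul]
    rw [this, _root_.map_smul, b.repr_self]
  have hptwise : ∀ w : EuclideanSpace ℝ (Fin 5),
      R0 (b.repr.symm w) * R0 (b.repr.symm w - (x - y))
      = (64 * π^4)⁻¹ * ((‖w‖^3)⁻¹ * (‖w - c • EuclideanSpace.single (0:Fin 5) (1:ℝ)‖^3)⁻¹) := by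
    intro w
    have h1 : ‖b.repr.symm w‖ = ‖w‖ := b.repr.symm.norm_map w
    have h2 : ‖b.repr.symm w - (x - y)‖
        = ‖w - c • EuclideanSpace.single (0:Fin 5) (1:ℝ)‖ := by
      have : b.repr.symm w - (x - y)
          = b.repr.symm (w - c • EuclideanSpace.single (0:Fin 5) (1:ℝ)) := by
        rw [map_sub, ← hrepr_v, b.repr.symm_apply_apply]
      rw [this, b.repr.symm.norm_map]
    rw [R0, R0, h1, h2]
    rw [one_div, one_div, mul_inv, mul_inv, mul_inv, mul_inv]
    ring
  simp only [hptwise]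
  rw [MeasureTheory.integral_const_mul, keyIntegral c hc]
  rw [hcdef]
  have hπ : (π : ℝ) ≠ 0 := pi_ne_zero
  field_simp
  ring
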